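/- For the immersion ψ(x) = ((1 − √3 x)/2, (1 + √3 x)/2) of S² into S³×S³, the almost product structure P maps tangent planes of the image to g-orthogonal planes: g(P dψ(v), dψ(w)) = 0 for all tangent vectors v, w to S² at x. -/

import Mathlib

open Quaternion

noncomputable section

/-- The almost complex structure `J` at the point `(p, q)` of `S³ × S³`,
acting on `T_p S³ × T_q S³ ⊆ ℍ × ℍ`:
`J(U,V) = (1/√3)(2pq⁻¹V − U, −2qp⁻¹U + V)`. -/
def Jmap (p q : ℍ[ℝ]) (W : ℍ[ℝ] × ℍ[ℝ]) : ℍ[ℝ] × ℍ[ℝ] :=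
  (Real.sqrt 3)⁻¹ •
    ((2 : ℝ) • (p * q⁻¹ * W.2) - W.1, -((2 : ℝ) • (q * p⁻¹ * W.1)) + W.2)

/-- The almost product structure `P` at `(p, q)`: `P(U,V) = (pq⁻¹V, qp⁻¹U)`. -/
def Pmap (p q : ℍ[ℝ]) (W : ℍ[ℝ] × ℍ[ℝ]) : ℍ[ℝ] × ℍ[ℝ] :=
  (p * q⁻¹ * W.2, q * p⁻¹ * W.1)

/-- The product round metric on `S³ × S³` (on tangent pairs). -/
def prodInner (X Y : ℍ[ℝ] × ℍ[ℝ]) : ℝ :=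
  (inner ℝ X.1 Y.1 : ℝ) + (inner ℝ X.2 Y.2 : ℝ)

/-- The nearly Kähler metric `g(X,Y) = (1/2)(⟨X,Y⟩ + ⟨JX,JY⟩)` at `(p,q)`. -/
def gmet (p q : ℍ[ℝ]) (X Y : ℍ[ℝ] × ℍ[ℝ]) : ℝ :=
  (1 / 2) * (prodInner X Y + prodInner (Jmap p q X) (Jmap p q Y))

/-- The differential of `ψ(x) = ((1 − √3 x)/2, (1 + √3 x)/2)` applied to a
tangent vector `v` of `S²` at `x`. -/
def dpsi (v : ℍ[ℝ]) : ℍ[ℝ] × ℍ[ℝ] :=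
  ((-(Real.sqrt 3 / 2)) • v, (Real.sqrt 3 / 2) • v)

/-- for `ψ(x) = ((1 − √3 x)/2, (1 + √3 x)/2)` on the sphere of
unit imaginary quaternions, `P` maps tangent planes of the image to
`g`-orthogonal planes: `g(P dψ(v), dψ(w)) = 0`. -/
theorem stmt_15 (x v w : ℍ[ℝ]) (hx : x.re = 0) (hx1 : ‖x‖ = 1)
    (hv : v.re = 0) (hvx : (inner ℝ v x : ℝ) = 0)
    (hw : w.re = 0) (hwx : (inner ℝ w x : ℝ) = 0) :
    gmet ((1 / 2 : ℝ) • (1 - Real.sqrt 3 • x)) ((1 / 2 : ℝ) • (1 + Real.sqrt 3 • x))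
        (Pmap ((1 / 2 : ℝ) • (1 - Real.sqrt 3 • x)) ((1 / 2 : ℝ) • (1 + Real.sqrt 3 • x))
          (dpsi v))
        (dpsi w) = 0 := by
  set s := Real.sqrt 3 with hs_def
  have hs : s * s = 3 := Real.mul_self_sqrt (by norm_num)
  have hs0 : s ≠ 0 := by
    intro h; rw [h] at hs; norm_num at hs
  have hsinv : s⁻¹ * s = 1 := inv_mul_cancel₀ hs0
  have hxs : star x = -x := Quaternion.star_eq_neg.mpr hx
  have hxx : x * x = -1 := by
    have h1 := Quaternion.self_mul_star x
    rw [hxs, mul_neg] at h1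
    have h2 : Quaternion.normSq x = 1 := by
      rw [Quaternion.normSq_eq_norm_mul_self, hx1, one_mul]
    rw [h2] at h1
    have h3 : -(x * x) = (1 : ℍ[ℝ]) := by rw [h1]; norm_num
    exact neg_eq_iff_eq_neg.mp h3
  set p : ℍ[ℝ] := (1 / 2 : ℝ) • (1 - s • x) with hp_def
  set q : ℍ[ℝ] := (1 / 2 : ℝ) • (1 + s • x) with hq_def
  have key : (1 - s • x) * (1 + s • x) = (4 : ℝ) • (1 : ℍ[ℝ]) := by
    rw [sub_mul, mul_add, mul_add, one_mul, one_mul, mul_one, smul_mul_smul_comm, hxx, hs]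
    module
  have key2 : (1 + s • x) * (1 - s • x) = (4 : ℝ) • (1 : ℍ[ℝ]) := by
    rw [add_mul, mul_sub, mul_sub, one_mul, one_mul, mul_one, smul_mul_smul_comm, hxx, hs]
    module
  have hpq : p * q = 1 := by
    rw [hp_def, hq_def, smul_mul_smul_comm, key, smul_smul]; norm_num
  have hqp : q * p = 1 := by
    rw [hp_def, hq_def, smul_mul_smul_comm, key2, smul_smul]; norm_num
  have hqi : q⁻¹ = p := inv_eq_of_mul_eq_one_right hqp
  have hpi : p⁻¹ = q := inv_eq_of_mul_eq_one_right hpq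
  have hsq : star q = p := by
    rw [hp_def, hq_def, Quaternion.star_smul, star_add, star_one, Quaternion.star_smul, hxs]
    module
  have hsp : star p = q := by
    rw [hp_def, hq_def, Quaternion.star_smul, star_sub, star_one, Quaternion.star_smul, hxs]
    module
  have hpp : p * p = -q := by
    rw [hp_def, hq_def, smul_mul_smul_comm, sub_mul, mul_sub, mul_sub, one_mul, one_mul,
      mul_one, smul_mul_smul_comm, hxx, hs]
    module
  have hqq : q * q = -p := by
    rw [hp_def, hq_def, smul_mul_smul_comm, add_mul, mul_add, mul_add, one_mul, one_mul,
      mul_one, smul_mul_smul_comm, hxx, hs]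
    module
  have re_comm : ∀ a b : ℍ[ℝ], (a * b).re = (b * a).re := fun a b => by
    rw [Quaternion.re_mul, Quaternion.re_mul]; ring
  have hinq : ∀ a b : ℍ[ℝ], (inner ℝ (q * a) (q * b) : ℝ) = inner ℝ a b := by
    intro a b
    rw [Quaternion.inner_def, Quaternion.inner_def, star_mul, hsq]
    have h : q * a * (star b * p) = q * (a * star b) * p := by noncomm_ring
    rw [h, re_comm, ← mul_assoc, hpq, one_mul]
  have hinp : ∀ a b : ℍ[ℝ], (inner ℝ (p * a) (p * b) : ℝ) = inner ℝ a b := by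
    intro a b
    rw [Quaternion.inner_def, Quaternion.inner_def, star_mul, hsp]
    have h : p * a * (star b * q) = p * (a * star b) * q := by noncomm_ring
    rw [h, re_comm, ← mul_assoc, hqp, one_mul]
  have hsum : p + q = 1 := by rw [hp_def, hq_def]; module
  have hsum1 : (inner ℝ (q * v) w : ℝ) + inner ℝ (p * v) w = inner ℝ v w := by
    rw [← inner_add_left, ← add_mul, add_comm q p, hsum, one_mul]
  have hsum2 : (inner ℝ v (q * w) : ℝ) + inner ℝ v (p * w) = inner ℝ v w := by
    rw [← inner_add_right, ← add_mul, add_comm q p, hsum, one_mul]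
  -- component computations
  have e1 : Pmap p q (dpsi v) = ((-(s/2)) • (q * v), (s/2) • (p * v)) := by
    simp only [Pmap, dpsi, hqi, hpi, hpp, hqq, mul_neg, neg_mul, mul_smul_comm, smul_neg,
      neg_smul, neg_neg]
    simp only [hs_def]
  have e2 : Jmap p q (Pmap p q (dpsi v)) =
      (-v + (1/2 : ℝ) • (q * v), -v + (1/2 : ℝ) • (p * v)) := by
    rw [e1]
    simp only [Jmap, hqi, hpi]
    have a1 : p * p * ((s/2) • (p * v)) = (-(s/2)) • v := by
      rw [hpp, mul_smul_comm, neg_mul, ← mul_assoc, hqp, one_mul, smul_neg, neg_smul]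
    have a2 : q * q * ((-(s/2)) • (q * v)) = (s/2) • v := by
      rw [hqq, mul_smul_comm, neg_mul, ← mul_assoc, hpq, one_mul]
      rw [neg_smul, smul_neg, neg_neg]
    rw [Prod.smul_mk, Prod.mk.injEq]
    constructor
    · rw [a1]
      match_scalars <;> (try simp only [hs_def]) <;> field_simp <;> ring
    · rw [a2]
      match_scalars <;> (try simp only [hs_def]) <;> field_simp <;> ring
  have e3 : Jmap p q (dpsi w) = ((1/2 : ℝ) • w - q * w, (1/2 : ℝ) • w - p * w) := by
    simp only [Jmap, dpsi, hqi, hpi]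
    have a1 : p * p * ((s/2) • w) = (-(s/2)) • (q * w) := by
      rw [hpp, mul_smul_comm, neg_mul, smul_neg, neg_smul]
    have a2 : q * q * ((-(s/2)) • w) = (s/2) • (p * w) := by
      rw [hqq, mul_smul_comm, neg_mul, neg_smul, smul_neg, neg_neg]
    rw [Prod.smul_mk, Prod.mk.injEq]
    constructor
    · rw [a1]
      match_scalars <;> (try simp only [hs_def]) <;> field_simp <;> ring
    · rw [a2]
      match_scalars <;> (try simp only [hs_def]) <;> field_simp <;> ring
  rw [gmet, e2, e3, e1]
  simp only [prodInner, dpsi]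
  simp only [inner_add_left, inner_sub_right, inner_neg_left, real_inner_smul_left,
    real_inner_smul_right]
  simp only [← hs_def]
  linear_combination (((inner ℝ (q*v) w : ℝ) + (inner ℝ (p*v) w : ℝ))/8) * hs + (1/2) * hsum1 +
    (1/2) * hsum2 - (1/4) * hinq v w - (1/4) * hinp v w
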